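/- In the doubling system on a finite set V of agents, let x₀ be a state with x₀(w) ∈ {0, 1} for all w, and let N_a = |{w : x₀(w) = 1}|. If a state x is reachable from x₀ by the reflexive-transitive closure of the step relation and some agent u has x(u) = k ≥ 1, then 2^{k−1} ≤ N_a; in particular every agent's value is bounded by log₂(N_a) + 1, so each value requires only O(log log n) bits of memory in a population of size n. -/

import Mathlib

/-- A step of the doubling system: two distinct agents with equal nonzero
values interact; the initiator's value increases by one and the responder's
value is reset to zero. -/
def DoubStep {V : Type*} [DecidableEq V] (x x' : V → ℕ) : Prop :=
  ∃ u v : V, u ≠ v ∧ x u = x v ∧ 0 < x u ∧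
    x' = Function.update (Function.update x u (x u + 1)) v 0

/-- The single-agent weight. -/
def doubF (n : ℕ) : ℕ := if n = 0 then 0 else 2 ^ (n - 1)

/-- The weight of a state. -/
def doubW {V : Type*} [Fintype V] (x : V → ℕ) : ℕ := ∑ w, doubF (x w)

lemma doubW_step {V : Type*} [DecidableEq V] [Fintype V] {x x' : V → ℕ}
    (h : DoubStep x x') : doubW x' = doubW x := by
  obtain ⟨u, v, huv, heq, hpos, hx'⟩ := h
  subst hx'
  have hcomp : (fun w => doubF (Function.update (Function.update x u (x u + 1)) v 0 w))
      = Function.update (Function.update (fun w => doubF (x w)) u (doubF (x u + 1))) v 0 := by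
    funext w
    by_cases hv : w = v
    · subst hv; simp [doubF]
    · by_cases hu : w = u
      · subst hu; simp [Function.update_of_ne hv, Function.update_of_ne huv]
      · simp [Function.update_of_ne hv, Function.update_of_ne hu]
  unfold doubW
  rw [hcomp]
  rw [Finset.sum_update_of_mem (Finset.mem_univ v)]
  have huv' : u ∈ Finset.univ \ {v} := by simp [huv]
  rw [Finset.sum_update_of_mem huv']
  have hsplit : (Finset.univ : Finset V) = insert v (insert u ((Finset.univ \ {v}) \ {u})) := by
    ext w
    by_cases hv : w = v
    · simp [hv]
    · by_cases hu : w = u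
      · simp [hu]
      · simp [hv, hu]
  conv_rhs => rw [hsplit]
  rw [Finset.sum_insert, Finset.sum_insert]
  · have h1 : doubF (x u + 1) = doubF (x u) + doubF (x v) := by
      rw [← heq]
      simp only [doubF, Nat.add_sub_cancel, if_neg (Nat.succ_ne_zero _), if_neg hpos.ne']
      have h2 : 2 ^ (x u) = 2 ^ (x u - 1) * 2 := by
        rw [← pow_succ]; congr 1; omega
      omega
    omega
  · simp
  · intro h
    simp only [Finset.mem_insert] at h
    rcases h with h | h
    · exact huv h.symm
    · simp at h


lemma doubW_reach {V : Type*} [DecidableEq V] [Fintype V] {x₀ x : V → ℕ}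
    (h : Relation.ReflTransGen DoubStep x₀ x) : doubW x = doubW x₀ := by
  induction h with
  | refl => rfl
  | tail _ hstep ih => rw [doubW_step hstep, ih]

theorem doubling_value_bound {V : Type*} [DecidableEq V] [Fintype V]
    (x₀ : V → ℕ) (h₀ : ∀ w : V, x₀ w ≤ 1)
    (Na : ℕ) (hNa : Na = (Finset.univ.filter (fun w => x₀ w = 1)).card)
    (x : V → ℕ) (hreach : Relation.ReflTransGen DoubStep x₀ x)
    (u : V) (k : ℕ) (hk : 1 ≤ k) (hxu : x u = k) :
    2 ^ (k - 1) ≤ Na ∧ k ≤ Nat.log 2 Na + 1 := by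
  have hW0 : doubW x₀ = Na := by
    rw [hNa, doubW]
    rw [Finset.card_filter]
    apply Finset.sum_congr rfl
    intro w _
    have := h₀ w
    interval_cases h : x₀ w <;> simp [doubF]
  have hWx : doubW x = Na := by rw [doubW_reach hreach, hW0]
  have hle : doubF (x u) ≤ doubW x := by
    rw [doubW]
    exact Finset.single_le_sum (f := fun w => doubF (x w)) (fun i _ => Nat.zero_le _) (Finset.mem_univ u)
  have h1 : 2 ^ (k - 1) ≤ Na := by
    rw [hWx] at hle
    rwa [hxu, doubF, if_neg (by omega)] at hle
  refine ⟨h1, ?_⟩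
  have hNa1 : 1 ≤ Na := le_trans (Nat.one_le_two_pow) h1
  have := (Nat.le_log_iff_pow_le (by norm_num) (by omega)).mpr h1
  omega
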